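/- arXiv:math/0408221 — 2 statements merged into one kernel-verified Lean document; each statement's English description precedes it below -/
import Mathlib

section
/- Let N be an odd positive integer, k an integer, a₂ ∈ ℂ, n ≥ 1 an integer, and α, β odd integers with 2^n ∣ αβN + 1. Let f : ℍ → ℂ satisfy f ∣[k] T = f, f ∣[k] W_N = f, f ∣[k] [[2,0],[0,1]] + f ∣[k] [[1,0],[0,2]] + f ∣[k] [[1,1],[0,2]] = a₂ • f, f ∣[k] [[2^{n−1}, α],[βN, (αβN+1)/2^{n−1}]] = f, and f ∣[k] [[2^n, α],[βN, (αβN+1)/2^n]] = f. Then f ∣[k] [[2^{n+1}, 2α],[βN, (αβN+1)/2^n]] + f ∣[k] [[2^n + βN, α + (αβN+1)/2^n],[2βN, (αβN+1)/2^{n−1}]] = f ∣[k] [[1,0],[0,2]] + f ∣[k] [[1,1],[0,2]]. -/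
open Matrix UpperHalfPlane Complex
open scoped ModularForm MatrixGroups

/-- The element of `GL(2, ℝ)⁺` with entries `[[a, b], [c, d]]` and positive determinant. -/
noncomputable def glp (a b c d : ℝ) (h : 0 < a * d - b * c) : GL(2, ℝ)⁺ :=
  ⟨Matrix.GeneralLinearGroup.mkOfDetNeZero !![a, b; c, d]
      (by rw [Matrix.det_fin_two_of]; exact ne_of_gt h),
   by
    rw [Matrix.mem_glpos]
    show (0:ℝ) < ((Matrix.GeneralLinearGroup.det _ : ℝˣ) : ℝ)
    rw [Matrix.GeneralLinearGroup.val_det_apply]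
    show (0:ℝ) < Matrix.det !![a, b; c, d]
    rw [Matrix.det_fin_two_of]; exact h⟩

lemma glp_mul (a b c d a' b' c' d' : ℝ) (h : 0 < a*d - b*c) (h' : 0 < a'*d' - b'*c') :
    glp a b c d h * glp a' b' c' d' h'
      = glp (a*a'+b*c') (a*b'+b*d') (c*a'+d*c') (c*b'+d*d')
        (by nlinarith [mul_pos h h']) := by
  apply Subtype.ext
  apply Units.ext
  show (!![a,b;c,d] : Matrix (Fin 2) (Fin 2) ℝ) * !![a',b';c',d'] = !![a*a'+b*c', a*b'+b*d'; c*a'+d*c', c*b'+d*d']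
  rw [Matrix.mul_fin_two]

lemma glp_eq (a b c d a' b' c' d' : ℝ) (h : 0 < a*d - b*c) (h' : 0 < a'*d' - b'*c')
    (ha : a = a') (hb : b = b') (hc : c = c') (hd : d = d') :
    glp a b c d h = glp a' b' c' d' h' := by subst ha hb hc hd; rfl

/-- The inductive step of "the process":  assuming invariance under `T`, `W_N`, the weight-`k`
Hecke relation at `2`, and invariance under the matrices of level `2^(n-1)` and `2^n`, four slashed
terms remain. -/
theorem slash_induction_step (N : ℕ) (hN : 0 < N) (hNodd : Odd N) (k : ℤ) (a₂ : ℂ)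
    (n : ℕ) (hn : 1 ≤ n) (α β : ℤ) (hα : Odd α) (hβ : Odd β)
    (hdvd : ((2:ℤ)^n) ∣ α * β * N + 1) (f : ℍ → ℂ)
    (hT : f ∣[k] (glp 1 1 0 1 (by norm_num) : GL (Fin 2) ℝ) = f)
    (hW : f ∣[k] (glp 1 0 (N:ℝ) 1 (by norm_num) : GL (Fin 2) ℝ) = f)
    (hT2 : f ∣[k] (glp 2 0 0 1 (by norm_num) : GL (Fin 2) ℝ) + f ∣[k] (glp 1 0 0 2 (by norm_num) : GL (Fin 2) ℝ)
        + f ∣[k] (glp 1 1 0 2 (by norm_num) : GL (Fin 2) ℝ) = a₂ • f)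
    (hMn1 : f ∣[k] (glp ((2:ℝ)^(n-1)) (α:ℝ) ((β:ℝ)*(N:ℝ)) (((α:ℝ)*(β:ℝ)*(N:ℝ)+1)/(2:ℝ)^(n-1))
        (by
          have hne : ((2:ℝ)^(n-1)) ≠ 0 := by positivity
          have h : (2:ℝ)^(n-1) * (((α:ℝ)*(β:ℝ)*(N:ℝ)+1)/(2:ℝ)^(n-1))
              - (α:ℝ) * ((β:ℝ)*(N:ℝ)) = 1 := by field_simp; ring
          linarith) : GL (Fin 2) ℝ) = f)
    (hMn : f ∣[k] (glp ((2:ℝ)^n) (α:ℝ) ((β:ℝ)*(N:ℝ)) (((α:ℝ)*(β:ℝ)*(N:ℝ)+1)/(2:ℝ)^n)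
        (by
          have hne : ((2:ℝ)^n) ≠ 0 := by positivity
          have h : (2:ℝ)^n * (((α:ℝ)*(β:ℝ)*(N:ℝ)+1)/(2:ℝ)^n)
              - (α:ℝ) * ((β:ℝ)*(N:ℝ)) = 1 := by field_simp; ring
          linarith) : GL (Fin 2) ℝ) = f) :
    f ∣[k] (glp ((2:ℝ)^(n+1)) (2*(α:ℝ)) ((β:ℝ)*(N:ℝ)) (((α:ℝ)*(β:ℝ)*(N:ℝ)+1)/(2:ℝ)^n)
        (by
          have hne : ((2:ℝ)^n) ≠ 0 := by positivity
          have h : (2:ℝ)^(n+1) * (((α:ℝ)*(β:ℝ)*(N:ℝ)+1)/(2:ℝ)^n)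
              - (2*(α:ℝ)) * ((β:ℝ)*(N:ℝ)) = 2 := by field_simp; ring
          linarith) : GL (Fin 2) ℝ)
      + f ∣[k] (glp ((2:ℝ)^n + (β:ℝ)*(N:ℝ)) ((α:ℝ) + ((α:ℝ)*(β:ℝ)*(N:ℝ)+1)/(2:ℝ)^n)
          (2*((β:ℝ)*(N:ℝ))) (((α:ℝ)*(β:ℝ)*(N:ℝ)+1)/(2:ℝ)^(n-1))
        (by
          have hs : (2:ℝ)^n = 2 * (2:ℝ)^(n-1) := by rw [← pow_succ']; congr 1; omega
          have hne : ((2:ℝ)^(n-1)) ≠ 0 := by positivity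
          have h : ((2:ℝ)^n + (β:ℝ)*(N:ℝ)) * (((α:ℝ)*(β:ℝ)*(N:ℝ)+1)/(2:ℝ)^(n-1))
              - ((α:ℝ) + ((α:ℝ)*(β:ℝ)*(N:ℝ)+1)/(2:ℝ)^n) * (2*((β:ℝ)*(N:ℝ))) = 2 := by
            rw [hs]; field_simp; ring
          linarith) : GL (Fin 2) ℝ)
      = f ∣[k] (glp 1 0 0 2 (by norm_num) : GL (Fin 2) ℝ) + f ∣[k] (glp 1 1 0 2 (by norm_num) : GL (Fin 2) ℝ) := by
  have hne1 : ((2:ℝ)^(n-1)) ≠ 0 := by positivity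
  have hnen : ((2:ℝ)^n) ≠ 0 := by positivity
  have h2n : (2:ℝ)^n = 2 * (2:ℝ)^(n-1) := by rw [← pow_succ']; congr 1; omega
  set x : ℝ := (α:ℝ)*(β:ℝ)*(N:ℝ)+1 with hx
  have hd : 2 * (x/(2:ℝ)^n) = x/(2:ℝ)^(n-1) := by
    rw [h2n]; field_simp
  have hMpos : (0:ℝ) < (2:ℝ)^n * (x/(2:ℝ)^n) - (α:ℝ) * ((β:ℝ)*(N:ℝ)) := by
    have h : (2:ℝ)^n * (x/(2:ℝ)^n) - (α:ℝ) * ((β:ℝ)*(N:ℝ)) = 1 := by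
      rw [hx]; field_simp; ring
    linarith
  have hM'pos : (0:ℝ) < (2:ℝ)^(n-1) * (x/(2:ℝ)^(n-1)) - (α:ℝ) * ((β:ℝ)*(N:ℝ)) := by
    have h : (2:ℝ)^(n-1) * (x/(2:ℝ)^(n-1)) - (α:ℝ) * ((β:ℝ)*(N:ℝ)) = 1 := by
      rw [hx]; field_simp; ring
    linarith
  have pA : (0:ℝ) < 2*1 - 0*0 := by norm_num
  have pB : (0:ℝ) < 1*2 - 0*0 := by norm_num
  have pC : (0:ℝ) < 1*2 - 1*0 := by norm_num
  set A := glp 2 0 0 1 pA with hA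
  set B := glp 1 0 0 2 pB with hB
  set C := glp 1 1 0 2 pC with hC
  set M := glp ((2:ℝ)^n) (α:ℝ) ((β:ℝ)*(N:ℝ)) (x/(2:ℝ)^n) hMpos with hM
  set M' := glp ((2:ℝ)^(n-1)) (α:ℝ) ((β:ℝ)*(N:ℝ)) (x/(2:ℝ)^(n-1)) hM'pos with hM'
  have hfM : f ∣[k] (M : GL (Fin 2) ℝ) = f := hMn
  have hfM' : f ∣[k] (M' : GL (Fin 2) ℝ) = f := hMn1
  have hT2' : f ∣[k] (A : GL (Fin 2) ℝ) + f ∣[k] (B : GL (Fin 2) ℝ) + f ∣[k] (C : GL (Fin 2) ℝ) = a₂ • f := hT2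
  -- target matrices
  have pG1 : (0:ℝ) < (2:ℝ)^(n+1) * (x/(2:ℝ)^n) - (2*(α:ℝ)) * ((β:ℝ)*(N:ℝ)) := by
    have h : (2:ℝ)^(n+1) * (x/(2:ℝ)^n) - (2*(α:ℝ)) * ((β:ℝ)*(N:ℝ)) = 2 := by
      rw [hx]; field_simp; ring
    linarith
  have pG2 : (0:ℝ) < ((2:ℝ)^n + (β:ℝ)*(N:ℝ)) * (x/(2:ℝ)^(n-1))
      - ((α:ℝ) + x/(2:ℝ)^n) * (2*((β:ℝ)*(N:ℝ))) := by
    have h : ((2:ℝ)^n + (β:ℝ)*(N:ℝ)) * (x/(2:ℝ)^(n-1))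
        - ((α:ℝ) + x/(2:ℝ)^n) * (2*((β:ℝ)*(N:ℝ))) = 2 := by
      rw [h2n, hx]; field_simp; ring
    linarith
  have pMid : (0:ℝ) < (2:ℝ)^n * (x/(2:ℝ)^(n-1)) - (α:ℝ) * (2*((β:ℝ)*(N:ℝ))) := by
    have h : (2:ℝ)^n * (x/(2:ℝ)^(n-1)) - (α:ℝ) * (2*((β:ℝ)*(N:ℝ))) = 2 := by
      rw [h2n, hx]; field_simp; ring
    linarith
  set G1 := glp ((2:ℝ)^(n+1)) (2*(α:ℝ)) ((β:ℝ)*(N:ℝ)) (x/(2:ℝ)^n) pG1 with hG1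
  set G2 := glp ((2:ℝ)^n + (β:ℝ)*(N:ℝ)) ((α:ℝ) + x/(2:ℝ)^n) (2*((β:ℝ)*(N:ℝ)))
      (x/(2:ℝ)^(n-1)) pG2 with hG2
  set Mid := glp ((2:ℝ)^n) (α:ℝ) (2*((β:ℝ)*(N:ℝ))) (x/(2:ℝ)^(n-1)) pMid with hMid
  have eA : A * M = G1 := by
    rw [hA, hM, glp_mul, hG1]
    exact glp_eq _ _ _ _ _ _ _ _ _ _ (by rw [pow_succ']; ring) (by ring) (by ring) (by ring)
  have eB : B * M = Mid := by
    rw [hB, hM, glp_mul, hMid]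
    exact glp_eq _ _ _ _ _ _ _ _ _ _ (by ring) (by ring) (by ring) (by rw [← hd]; ring)
  have eM'A : M' * A = Mid := by
    rw [hM', hA, glp_mul, hMid]
    exact glp_eq _ _ _ _ _ _ _ _ _ _ (by rw [h2n]; ring) (by ring) (by ring) (by ring)
  have eC : C * M = G2 := by
    rw [hC, hM, glp_mul, hG2]
    exact glp_eq _ _ _ _ _ _ _ _ _ _ (by ring) (by ring) (by ring) (by rw [← hd]; ring)
  have hBM : f ∣[k] (Mid : GL (Fin 2) ℝ) = f ∣[k] (A : GL (Fin 2) ℝ) := by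
    rw [← eM'A, Subgroup.coe_mul, SlashAction.slash_mul, hfM']
  have hsum : f ∣[k] (G1 : GL (Fin 2) ℝ) + f ∣[k] (A : GL (Fin 2) ℝ) + f ∣[k] (G2 : GL (Fin 2) ℝ) = a₂ • f := by
    rw [← eA, ← hBM, ← eB, ← eC, Subgroup.coe_mul, Subgroup.coe_mul, Subgroup.coe_mul, SlashAction.slash_mul, SlashAction.slash_mul,
      SlashAction.slash_mul, ← SlashAction.add_slash, ← SlashAction.add_slash, hT2',
      ModularForm.smul_slash, hfM]
    have hM0 : 0 < (((M : GL (Fin 2) ℝ) : Matrix (Fin 2) (Fin 2) ℝ)).det := by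
      rw [← Matrix.GeneralLinearGroup.val_det_apply]; exact (Matrix.mem_glpos _).mp M.2
    simp [σ, hM0]
  have h := hsum.trans hT2'.symm
  exact add_right_cancel (b := f ∣[k] (A : GL (Fin 2) ℝ))
    (by calc f ∣[k] (G1 : GL (Fin 2) ℝ) + f ∣[k] (G2 : GL (Fin 2) ℝ) + f ∣[k] (A : GL (Fin 2) ℝ) = f ∣[k] (G1 : GL (Fin 2) ℝ) + f ∣[k] (A : GL (Fin 2) ℝ) + f ∣[k] (G2 : GL (Fin 2) ℝ) := by abel
      _ = f ∣[k] (A : GL (Fin 2) ℝ) + f ∣[k] (B : GL (Fin 2) ℝ) + f ∣[k] (C : GL (Fin 2) ℝ) := h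
      _ = f ∣[k] (B : GL (Fin 2) ℝ) + f ∣[k] (C : GL (Fin 2) ℝ) + f ∣[k] (A : GL (Fin 2) ℝ) := by abel)
end

section
/- For every positive integer N with N ≤ 4, the group Γ_0(N) is generated by the three matrices T = [[1,1],[0,1]], W_N = [[1,0],[N,1]], and −I. -/
open Matrix CongruenceSubgroup
open scoped MatrixGroups

/-- The matrix `T = [[1,1],[0,1]]` in `SL(2, ℤ)`. -/
def T : SL(2, ℤ) := ⟨!![1, 1; 0, 1], by norm_num [Matrix.det_fin_two_of]⟩

/-- The matrix `W_N = [[1,0],[N,1]]` in `SL(2, ℤ)`. -/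
def W (N : ℕ) : SL(2, ℤ) := ⟨!![1, 0; (N:ℤ), 1], by norm_num [Matrix.det_fin_two_of]⟩

/-- The matrix `-I` in `SL(2, ℤ)`. -/
def negI : SL(2, ℤ) := ⟨!![-1, 0; 0, -1], by norm_num [Matrix.det_fin_two_of]⟩

lemma coe_myT_zpow (n : ℤ) : (T^n).1 = !![1, n; 0, 1] := ModularGroup.coe_T_zpow n

lemma W_inv (N : ℕ) : (W N)⁻¹ = ⟨!![1, 0; -(N:ℤ), 1], by norm_num [Matrix.det_fin_two_of]⟩ := by
  apply inv_eq_of_mul_eq_one_right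
  ext i j
  show (_ * _ : Matrix (Fin 2) (Fin 2) ℤ) i j = _
  simp [W, Matrix.mul_fin_two]
  fin_cases i <;> fin_cases j <;> simp

lemma coe_W_zpow (N : ℕ) (j : ℤ) : ((W N)^j).1 = !![1, 0; j*(N:ℤ), 1] := by
  induction j using Int.induction_on with
  | zero => rw [zpow_zero, Matrix.SpecialLinearGroup.coe_one]; ext i j; fin_cases i <;> fin_cases j <;> simp [Matrix.one_apply]
  | succ n ih =>
      rw [_root_.zpow_add_one, Matrix.SpecialLinearGroup.coe_mul, ih]
      simp [W, Matrix.mul_fin_two]; ring_nf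
  | pred n ih =>
      rw [_root_.zpow_sub_one, Matrix.SpecialLinearGroup.coe_mul, ih, W_inv]
      simp [Matrix.mul_fin_two]; ring_nf

lemma bmod_eq_add_mul (a : ℤ) (m : ℕ) : ∃ k : ℤ, Int.bmod a m = a + m * k := by
  rw [Int.bmod_def]
  split
  · exact ⟨-(a/m), by rw [Int.emod_def]; ring⟩
  · exact ⟨-(a/m) - 1, by rw [Int.emod_def]; ring⟩

lemma S_eq : (⟨!![0,-1;1,0], by norm_num [Matrix.det_fin_two_of]⟩ : SL(2,ℤ)) = T⁻¹ * W 1 * T⁻¹ := by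
  have hTinv : T⁻¹ = (⟨!![1,-1;0,1], by norm_num [Matrix.det_fin_two_of]⟩ : SL(2,ℤ)) := by
    apply inv_eq_of_mul_eq_one_right
    ext i j
    show (_ * _ : Matrix (Fin 2) (Fin 2) ℤ) i j = _
    simp [T, Matrix.mul_fin_two]
    fin_cases i <;> fin_cases j <;> simp
  rw [hTinv]
  ext i j
  show _ = (_ * _ * _ : Matrix (Fin 2) (Fin 2) ℤ) i j
  simp [W, Matrix.mul_fin_two]

/-- For `1 ≤ N ≤ 4`, the group `Γ₀(N)` is generated by `T`, `W_N` and `-I`. -/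
theorem Gamma0_generated_of_le_four (N : ℕ) (hN : 0 < N) (hN4 : N ≤ 4) :
    Subgroup.closure {T, W N, negI} = Gamma0 N := by
  set H := Subgroup.closure {T, W N, negI} with hH
  have hT : T ∈ H := Subgroup.subset_closure (by simp)
  have hW : W N ∈ H := Subgroup.subset_closure (by simp)
  have hnegI : negI ∈ H := Subgroup.subset_closure (by simp)
  have hTG : T ∈ Gamma0 N := by rw [Gamma0_mem]; simp [T]
  have hWG : W N ∈ Gamma0 N := by rw [Gamma0_mem]; simp [W]
  have hnegIG : negI ∈ Gamma0 N := by rw [Gamma0_mem]; simp [negI]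
  apply le_antisymm
  · rw [hH, Subgroup.closure_le]
    rintro x (rfl | rfl | rfl)
    · exact hTG
    · exact hWG
    · exact hnegIG
  · have key : ∀ n : ℕ, ∀ g : SL(2,ℤ), g ∈ Gamma0 N → ((g : Matrix (Fin 2) (Fin 2) ℤ) 1 0).natAbs = n → g ∈ H := by
      intro n
      induction n using Nat.strong_induction_on with
      | _ n IH =>
        intro g hg hn
        set a := (g : Matrix (Fin 2) (Fin 2) ℤ) 0 0 with ha
        set b := (g : Matrix (Fin 2) (Fin 2) ℤ) 0 1 with hb
        set c := (g : Matrix (Fin 2) (Fin 2) ℤ) 1 0 with hc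
        set d := (g : Matrix (Fin 2) (Fin 2) ℤ) 1 1 with hd
        have geta : (g : Matrix (Fin 2) (Fin 2) ℤ) = !![a, b; c, d] := Matrix.eta_fin_two _
        have hdet : a * d - b * c = 1 := by
          have h2 := g.2
          rwa [Matrix.det_fin_two] at h2
        have hNc : (N : ℤ) ∣ c := by
          have h0 := Gamma0_mem.mp hg
          exact_mod_cast (ZMod.intCast_zmod_eq_zero_iff_dvd c N).mp (by exact_mod_cast h0)
        by_cases hc0 : c = 0
        · -- base case: upper triangular
          rw [hc0, mul_zero, sub_zero] at hdet
          rcases Int.eq_one_or_neg_one_of_mul_eq_one' hdet with ⟨h1, h2⟩ | ⟨h1, h2⟩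
          · have : g = T ^ b := by
              apply Subtype.ext
              rw [coe_myT_zpow]
              show (g : Matrix (Fin 2) (Fin 2) ℤ) = _
              rw [geta, h1, h2, hc0]
            rw [this]
            exact Subgroup.zpow_mem H hT b
          · have : g = negI * T ^ (-b) := by
              apply Subtype.ext
              rw [Matrix.SpecialLinearGroup.coe_mul, coe_myT_zpow]
              show (g : Matrix (Fin 2) (Fin 2) ℤ) = _
              rw [geta, h1, h2, hc0]
              simp [negI, Matrix.mul_fin_two]
            rw [this]
            exact Subgroup.mul_mem H hnegI (Subgroup.zpow_mem H hT _)
        · -- c ≠ 0 : descent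
          have hcpos : 0 < c.natAbs := Int.natAbs_pos.mpr hc0
          set a' := Int.bmod a c.natAbs with ha'
          obtain ⟨k, hk⟩ : ∃ k : ℤ, a' = a + c * k := by
            obtain ⟨k0, hk0⟩ := bmod_eq_add_mul a c.natAbs
            rcases Int.natAbs_eq c with h | h
            · exact ⟨k0, by rw [ha', hk0, ← h]⟩
            · refine ⟨-k0, ?_⟩
              have h2 : ((c.natAbs : ℤ)) = -c := by omega
              rw [ha', hk0, h2]; ring
          set g1 := T ^ k * g with hg1def
          have hg1coe : (g1 : Matrix (Fin 2) (Fin 2) ℤ) = !![a', b + k * d; c, d] := by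
            rw [hg1def, Matrix.SpecialLinearGroup.coe_mul, coe_myT_zpow, geta,
              Matrix.mul_fin_two]
            ext i j
            fin_cases i <;> fin_cases j <;> simp
            · show a + k * c = a'
              rw [hk]; ring
          set b1 := b + k * d with hb1d
          have hg1G : g1 ∈ Gamma0 N := Subgroup.mul_mem _ (Subgroup.zpow_mem _ hTG k) hg
          have hdet1 : a' * d - b1 * c = 1 := by
            have h2 := g1.2
            rwa [hg1coe, Matrix.det_fin_two] at h2
          by_cases ha0 : a' = 0
          · -- then c = ±1 and N = 1
            have hcu : IsUnit c := IsUnit.of_mul_eq_one (a := c) (-b1) (by rw [ha0] at hdet1; linarith)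
            have hNdvd1 : (N : ℤ) ∣ 1 := by
              rcases Int.isUnit_iff.mp hcu with h | h
              · rw [h] at hNc; exact hNc
              · rw [h] at hNc; exact (dvd_neg).mp hNc
            have hN1 : N = 1 := Nat.dvd_one.mp (by exact_mod_cast hNdvd1)
            subst hN1
            set S : SL(2,ℤ) := ⟨!![0,-1;1,0], by norm_num [Matrix.det_fin_two_of]⟩ with hSdef
            have hS : S ∈ H := by
              rw [hSdef, S_eq]
              exact Subgroup.mul_mem _ (Subgroup.mul_mem _ (Subgroup.inv_mem _ hT) hW)
                (Subgroup.inv_mem _ hT)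
            set g2 := S * g1 with hg2def
            have hg2coe : (g2 : Matrix (Fin 2) (Fin 2) ℤ) = !![-c, -d; 0, b1] := by
              rw [hg2def, Matrix.SpecialLinearGroup.coe_mul, hg1coe, ha0]
              show (!![0,-1;1,0] : Matrix (Fin 2) (Fin 2) ℤ) * _ = _
              rw [Matrix.mul_fin_two]; norm_num
            have hg2G : g2 ∈ Gamma0 1 := by
              rw [Gamma0_mem]
              exact Subsingleton.elim _ _
            have hg2H : g2 ∈ H := by
              apply IH 0 _ g2 hg2G (by rw [hg2coe]; simp)
              have : c.natAbs = 1 := Int.isUnit_iff.mp hcu |>.elim (fun h => by omega)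
                (fun h => by omega)
              omega
            have hgback : g = (T ^ k)⁻¹ * (S⁻¹ * g2) := by
              rw [hg2def, hg1def]; group
            rw [hgback]
            exact Subgroup.mul_mem _ (Subgroup.inv_mem _ (Subgroup.zpow_mem _ hT k))
              (Subgroup.mul_mem _ (Subgroup.inv_mem _ hS) hg2H)
          · -- main descent step
            set M2 := N * a'.natAbs with hM2
            have hM2pos : 0 < M2 := Nat.mul_pos hN (Int.natAbs_pos.mpr ha0)
            set c' := Int.bmod c M2 with hc'
            obtain ⟨j, hj⟩ : ∃ j : ℤ, c' = c + ((N : ℤ) * a') * j := by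
              obtain ⟨j0, hj0⟩ := bmod_eq_add_mul c M2
              have hcast : ((M2 : ℤ)) = (N : ℤ) * ((a'.natAbs : ℤ)) := by
                rw [hM2]; push_cast; ring
              rcases Int.natAbs_eq a' with h | h
              · exact ⟨j0, by rw [hc', hj0, hcast, ← h]⟩
              · refine ⟨-j0, ?_⟩
                have h2 : ((a'.natAbs : ℤ)) = -a' := by omega
                rw [hc', hj0, hcast, h2]; ring
            set g2 := (W N) ^ j * g1 with hg2def
            have hg2coe : (g2 : Matrix (Fin 2) (Fin 2) ℤ) = !![a', b1; c', j * N * b1 + d] := by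
              rw [hg2def, Matrix.SpecialLinearGroup.coe_mul, coe_W_zpow, hg1coe,
                Matrix.mul_fin_two]
              ext i j
              fin_cases i <;> fin_cases j <;> simp
              · show j * (N : ℤ) * a' + c = c'
                rw [hj]; ring
            have hg2G : g2 ∈ Gamma0 N := Subgroup.mul_mem _ (Subgroup.zpow_mem _ hWG j) hg1G
            -- the size bounds
            have hbd1 : a' ≤ ((c.natAbs : ℤ) - 1) / 2 := Int.bmod_le hcpos
            have hbd2 : -((c.natAbs : ℤ) / 2) ≤ a' := Int.le_bmod hcpos
            have hbd3 : c' ≤ ((M2 : ℤ) - 1) / 2 := Int.bmod_le hM2pos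
            have hbd4 : -((M2 : ℤ) / 2) ≤ c' := Int.le_bmod hM2pos
            have h2a : 2 * a'.natAbs ≤ c.natAbs := by omega
            have h2c : 2 * c'.natAbs ≤ M2 := by omega
            have hM2le : M2 ≤ 4 * a'.natAbs := by
              rw [hM2]; exact Nat.mul_le_mul_right _ hN4
            have hlt : c'.natAbs < c.natAbs := by
              by_contra hge
              have heq : c.natAbs = 2 * a'.natAbs := by omega
              have hdvd : a' ∣ c := Int.natAbs_dvd_natAbs.mp ⟨2, by omega⟩
              have hu : a' ∣ (1 : ℤ) := by
                rw [← hdet1]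
                exact dvd_sub (Dvd.dvd.mul_right dvd_rfl d) (Dvd.dvd.mul_left hdvd b1)
              have ha1 : a'.natAbs = 1 := by
                rcases Int.isUnit_iff.mp (isUnit_of_dvd_one hu) with h | h <;> omega
              have hM2N : M2 = N := by rw [hM2, ha1, mul_one]
              have hN4' : N = 4 := by omega
              obtain ⟨t, ht⟩ := hNc
              rw [hN4'] at ht
              push_cast at ht
              omega
            have hg2H : g2 ∈ H :=
              IH c'.natAbs (by omega) g2 hg2G (by rw [hg2coe]; simp)
            have hgback : g = (T ^ k)⁻¹ * (((W N) ^ j)⁻¹ * g2) := by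
              rw [hg2def, hg1def]; group
            rw [hgback]
            exact Subgroup.mul_mem _ (Subgroup.inv_mem _ (Subgroup.zpow_mem _ hT k))
              (Subgroup.mul_mem _ (Subgroup.inv_mem _ (Subgroup.zpow_mem _ hW j)) hg2H)
    intro g hg
    exact key _ g hg rfl
end
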